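/- Let H be a complex Hilbert space, G : H ≃L[ℂ] H an invertible selfadjoint continuous linear operator, and P : H →L[ℂ] H a continuous linear projection (P ∘ P = P) whose adjoint satisfies P† = G ∘ P ∘ G⁻¹. If φ ∈ H is nonzero, P φ = φ, and the range of P equals the one-dimensional complex span of φ, then the G-normalization factor ⟪φ, G φ⟫ is nonzero. -/

import Mathlib

open scoped ComplexInnerProductSpace

/-- Non-vanishing of the normalization factor `N = (φ, G φ)` for a simple
eigenvalue: `P` is the associated one-dimensional Riesz projection. -/
theorem normalization_ne_zero_simple
    {H : Type*} [NormedAddCommGroup H] [InnerProductSpace ℂ H] [CompleteSpace H]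
    (G : H ≃L[ℂ] H) (hG : ∀ f g : H, ⟪G f, g⟫ = ⟪f, G g⟫)
    (P : H →L[ℂ] H) (hP : P ∘L P = P)
    (hadj : ContinuousLinearMap.adjoint P = (G : H →L[ℂ] H) ∘L P ∘L (G.symm : H →L[ℂ] H))
    (φ : H) (hφ : φ ≠ 0) (hPφ : P φ = φ)
    (hrange : LinearMap.range (P : H →ₗ[ℂ] H) = Submodule.span ℂ {φ}) :
    ⟪φ, G φ⟫ ≠ 0 := by
  intro hN
  have hfix : ContinuousLinearMap.adjoint P (G φ) = G φ := by
    rw [hadj]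
    simp [hPφ]
  have hGφφ : ⟪G φ, φ⟫ = 0 := by
    rw [← inner_conj_symm, hN, map_zero]
  have key : ∀ f : H, ⟪G φ, f⟫ = 0 := by
    intro f
    have h1 : ⟪G φ, f⟫ = ⟪G φ, P f⟫ := by
      rw [← ContinuousLinearMap.adjoint_inner_left, hfix]
    have h2 : P f ∈ Submodule.span ℂ {φ} := by
      rw [← hrange]; exact ⟨f, rfl⟩
    obtain ⟨c, hc⟩ := Submodule.mem_span_singleton.mp h2
    rw [h1, ← hc, inner_smul_right, hGφφ, mul_zero]
  have : G φ = 0 := by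
    have := key (G φ)
    exact inner_self_eq_zero.mp this
  exact hφ (by simpa using congrArg G.symm this)
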